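/- Let ρ be a trace-class positive operator on L²(ℝⁿ) with Fourier conjugate density g = dν_{ρ̂}/d*ξ ∈ L¹, distribution function F_{ρ̂}(y) = vol*({g > y}). Then S_F(ρ̂) := ∫₀^∞ F_{ρ̂}(y) ln F_{ρ̂}(y) dy satisfies S_F(ρ̂) ≤ S_ξ(ρ̂) + τ(ρ)(1 + ln τ(ρ)), where S_ξ(ρ̂) = −∫_{ℝⁿ} ln(g) g d*ξ. -/

import Mathlib

open MeasureTheory Set

/-- `log` is integrable on `(0, c]`. -/
lemma aux_integrableOn_log (c : ℝ) : IntegrableOn Real.log (Ioc 0 c) := by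
  rcases le_or_gt c 0 with hc | hc
  · rw [Ioc_eq_empty (not_lt.mpr hc)]; exact integrableOn_empty
  have maj : IntegrableOn (fun x : ℝ => 2 * (x ^ ((2:ℝ)⁻¹) + x ^ (-(2:ℝ)⁻¹))) (Ioc 0 c) := by
    have h1 : IntervalIntegrable (fun x : ℝ => x ^ ((2:ℝ)⁻¹)) volume 0 c :=
      intervalIntegral.intervalIntegrable_rpow' (by norm_num)
    have h2 : IntervalIntegrable (fun x : ℝ => x ^ (-(2:ℝ)⁻¹)) volume 0 c :=
      intervalIntegral.intervalIntegrable_rpow' (by norm_num)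
    have h3 := (h1.add h2).smul (2 : ℝ)
    rw [intervalIntegrable_iff, uIoc_of_le hc.le] at h3
    simpa [Pi.smul_def, smul_eq_mul] using h3
  refine Integrable.mono' maj Real.measurable_log.aestronglyMeasurable ?_
  filter_upwards [ae_restrict_mem measurableSet_Ioc] with x hx
  have hx0 : 0 < x := hx.1
  set y := x ^ ((2:ℝ)⁻¹) with hy
  have hy0 : 0 < y := Real.rpow_pos_of_pos hx0 _
  have hlogx : Real.log x = 2 * Real.log y := by
    rw [hy, Real.log_rpow hx0]; ring
  have hyinv : x ^ (-(2:ℝ)⁻¹) = y⁻¹ := by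
    rw [hy, ← Real.rpow_neg hx0.le]
  have h1 : Real.log y ≤ y := (Real.log_le_sub_one_of_pos hy0).trans (by linarith)
  have h2 : -Real.log y ≤ y⁻¹ := by
    have := Real.log_le_sub_one_of_pos (inv_pos.mpr hy0)
    rw [Real.log_inv] at this
    have : -Real.log y ≤ y⁻¹ - 1 := this
    linarith
  have habs : |Real.log y| ≤ y + y⁻¹ := by
    rw [abs_le]
    constructor
    · have : 0 ≤ y := hy0.le
      nlinarith [inv_pos.mpr hy0]
    · nlinarith [inv_pos.mpr hy0]
  rw [Real.norm_eq_abs, hlogx, abs_mul, abs_two, hyinv]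
  nlinarith [abs_nonneg (Real.log y)]

lemma aux_intervalIntegrable_log1 {c : ℝ} (hc : 0 ≤ c) :
    IntervalIntegrable (fun t => Real.log t + 1) volume 0 c := by
  have h : IntervalIntegrable Real.log volume 0 c := by
    rw [intervalIntegrable_iff, uIoc_of_le hc]
    exact aux_integrableOn_log c
  exact h.add intervalIntegrable_const

/-- FTC: `∫_0^a (log t + 1) dt = a log a` for `a ≥ 0`. -/
lemma aux_ftc {a : ℝ} (ha : 0 ≤ a) :
    ∫ t in (0:ℝ)..a, (Real.log t + 1) = a * Real.log a := by
  have key := intervalIntegral.integral_eq_sub_of_hasDeriv_right_of_le ha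
    (Real.continuous_mul_log.continuousOn)
    (fun x hx => (Real.hasDerivAt_mul_log (ne_of_gt hx.1)).hasDerivWithinAt)
    (aux_intervalIntegrable_log1 ha)
  simpa using key

lemma aux_intervalIntegrable_max {f h : ℝ → ℝ} {a b : ℝ}
    (hf : IntervalIntegrable f volume a b) (hh : IntervalIntegrable h volume a b) :
    IntervalIntegrable (fun t => max (f t) (h t)) volume a b := by
  have h1 := hf.1.sup hh.1
  have h2 := hf.2.sup hh.2
  exact ⟨h1, h2⟩

noncomputable def w2 : ℝ → ℝ := fun t => max (-(Real.log t + 1)) 0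
noncomputable def w1 : ℝ → ℝ := fun t => max (Real.log t + 1) 0

lemma w2_intble {c : ℝ} (hc : 0 ≤ c) : IntervalIntegrable w2 volume 0 c :=
  aux_intervalIntegrable_max (aux_intervalIntegrable_log1 hc).neg intervalIntegrable_const

lemma w1_intble {c : ℝ} (hc : 0 ≤ c) : IntervalIntegrable w1 volume 0 c :=
  aux_intervalIntegrable_max (aux_intervalIntegrable_log1 hc) intervalIntegrable_const

lemma w2_small {a : ℝ} (ha : 0 ≤ a) (haE : a ≤ Real.exp (-1)) :
    ∫ t in (0:ℝ)..a, w2 t = -(a * Real.log a) := by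
  have hcong : ∫ t in (0:ℝ)..a, w2 t = ∫ t in (0:ℝ)..a, -(Real.log t + 1) := by
    apply intervalIntegral.integral_congr_ae
    refine Filter.Eventually.of_forall fun x hx => ?_
    rw [uIoc_of_le ha] at hx
    have hlog : Real.log x ≤ -1 := by
      have h1 : Real.log x ≤ Real.log (Real.exp (-1)) :=
        Real.log_le_log hx.1 (hx.2.trans haE)
      rwa [Real.log_exp] at h1
    have : 0 ≤ -(Real.log x + 1) := by linarith
    exact max_eq_left this
  rw [hcong, intervalIntegral.integral_neg, aux_ftc ha]

lemma w2_eq {a : ℝ} (ha : 0 ≤ a) :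
    ∫ t in (0:ℝ)..a, w2 t
      = -(min a (Real.exp (-1)) * Real.log (min a (Real.exp (-1)))) := by
  have hE : (0:ℝ) < Real.exp (-1) := Real.exp_pos _
  rcases le_total a (Real.exp (-1)) with h | h
  · rw [min_eq_left h]; exact w2_small ha h
  · rw [min_eq_right h]
    have hsplit := intervalIntegral.integral_add_adjacent_intervals
      (w2_intble hE.le) (((w2_intble hE.le).symm).trans (w2_intble ha))
    have hzero : ∫ t in (Real.exp (-1))..a, w2 t = 0 := by
      have : ∫ t in (Real.exp (-1))..a, w2 t = ∫ t in (Real.exp (-1))..a, (0:ℝ) := by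
        apply intervalIntegral.integral_congr_ae
        refine Filter.Eventually.of_forall fun x hx => ?_
        rw [uIoc_of_le h] at hx
        have hlog : (-1:ℝ) ≤ Real.log x := by
          have h1 : Real.log (Real.exp (-1)) ≤ Real.log x := Real.log_le_log hE hx.1.le
          rwa [Real.log_exp] at h1
        have : -(Real.log x + 1) ≤ 0 := by linarith
        exact max_eq_right this
      simpa using this
    rw [← hsplit, hzero, add_zero]
    exact w2_small hE.le le_rfl

lemma w1_eq {a : ℝ} (ha : 0 ≤ a) :
    ∫ t in (0:ℝ)..a, w1 t = a * Real.log a + ∫ t in (0:ℝ)..a, w2 t := by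
  have hpt : ∀ t, w1 t = (Real.log t + 1) + w2 t := by
    intro t
    unfold w1 w2
    rcases le_total 0 (Real.log t + 1) with h | h
    · rw [max_eq_left h, max_eq_right (by linarith)]; ring
    · rw [max_eq_right h, max_eq_left (by linarith)]; ring
  calc ∫ t in (0:ℝ)..a, w1 t = ∫ t in (0:ℝ)..a, ((Real.log t + 1) + w2 t) := by
        simp only [hpt]
    _ = (∫ t in (0:ℝ)..a, (Real.log t + 1)) + ∫ t in (0:ℝ)..a, w2 t :=
        intervalIntegral.integral_add (aux_intervalIntegrable_log1 ha) (w2_intble ha)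
    _ = a * Real.log a + ∫ t in (0:ℝ)..a, w2 t := by rw [aux_ftc ha]

/-- Layer cake with weight, real-valued version. -/
lemma aux_layercake {α : Type*} [MeasurableSpace α] (μ : Measure α) {g : α → ℝ}
    (hgnn : ∀ ξ, 0 ≤ g ξ) (hgint : Integrable g μ)
    {w : ℝ → ℝ} (hw_meas : Measurable w) (hw_nn : ∀ t, 0 ≤ w t)
    (hw_int : ∀ t, 0 < t → IntervalIntegrable w volume 0 t)
    (hφint : Integrable (fun ω => ∫ t in (0:ℝ)..g ω, w t) μ) :
    IntegrableOn (fun t => (μ {a | t < g a}).toReal * w t) (Ioi 0) ∧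
      ∫ ω, (∫ t in (0:ℝ)..g ω, w t) ∂μ =
        ∫ t in Ioi (0:ℝ), (μ {a | t < g a}).toReal * w t := by
  have key := lintegral_comp_eq_lintegral_meas_lt_mul μ (Filter.Eventually.of_forall hgnn)
    hgint.aemeasurable (fun t ht => hw_int t ht) (Filter.Eventually.of_forall fun t => hw_nn t)
  have hφnn : 0 ≤ᵐ[μ] fun ω => ∫ t in (0:ℝ)..g ω, w t :=
    Filter.Eventually.of_forall fun ω =>
      intervalIntegral.integral_nonneg (hgnn ω) (fun t _ => hw_nn t)
  have hrhs : ∫⁻ t in Ioi (0:ℝ), μ {a | t < g a} * ENNReal.ofReal (w t)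
      = ∫⁻ t in Ioi (0:ℝ), ENNReal.ofReal ((μ {a | t < g a}).toReal * w t) := by
    apply setLIntegral_congr_fun measurableSet_Ioi
    intro t ht
    dsimp only
    rw [ENNReal.ofReal_mul ENNReal.toReal_nonneg,
      ENNReal.ofReal_toReal (hgint.measure_gt_lt_top ht).ne]
  have hFw_meas : Measurable fun t => (μ {a | t < g a}).toReal * w t := by
    have hanti : Measurable fun t : ℝ => μ {a | t < g a} :=
      Antitone.measurable (fun s t hst => measure_mono fun a h => lt_of_le_of_lt hst h)
    exact hanti.ennreal_toReal.mul hw_meas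
  have hFw_nn : ∀ t, 0 ≤ (μ {a | t < g a}).toReal * w t := fun t =>
    mul_nonneg ENNReal.toReal_nonneg (hw_nn t)
  have hfin : ∫⁻ t in Ioi (0:ℝ), ENNReal.ofReal ((μ {a | t < g a}).toReal * w t) < ⊤ := by
    rw [← hrhs, ← key, ← ofReal_integral_eq_lintegral_ofReal hφint hφnn]
    exact ENNReal.ofReal_lt_top
  have hint : IntegrableOn (fun t => (μ {a | t < g a}).toReal * w t) (Ioi 0) := by
    refine ⟨hFw_meas.aestronglyMeasurable, ?_⟩
    rw [hasFiniteIntegral_iff_ofReal (Filter.Eventually.of_forall fun t => hFw_nn t)]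
    exact hfin
  refine ⟨hint, ?_⟩
  have heq : ENNReal.ofReal (∫ ω, (∫ t in (0:ℝ)..g ω, w t) ∂μ)
      = ENNReal.ofReal (∫ t in Ioi (0:ℝ), (μ {a | t < g a}).toReal * w t) := by
    rw [ofReal_integral_eq_lintegral_ofReal hφint hφnn, key, hrhs,
      ← ofReal_integral_eq_lintegral_ofReal hint
        (Filter.Eventually.of_forall fun t => hFw_nn t)]
  exact (ENNReal.ofReal_eq_ofReal_iff
    (integral_nonneg fun ω => intervalIntegral.integral_nonneg (hgnn ω) fun t _ => hw_nn t)
    (setIntegral_nonneg measurableSet_Ioi fun t _ => hFw_nn t)).mp heq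

/-- Equation (53) (proof of Corollary 1.5): for a trace-class positive operator
`ρ` on `L²(ℝⁿ)` with Fourier-side density `g = dν_{ρ̂}/d*ξ ∈ L¹(d*ξ)`,
`τ(ρ) = ∫ g d*ξ` and distribution function `F_{ρ̂}(y) = vol*({g > y})`, one has
`S_F(ρ̂) = ∫₀^∞ F_{ρ̂} ln F_{ρ̂} dy ≤ S_ξ(ρ̂) + τ(ρ)(1 + ln τ(ρ))` where
`S_ξ(ρ̂) = −∫ g ln g d*ξ`. -/
theorem stmt_15 (n : ℕ) (m : Measure (EuclideanSpace ℝ (Fin n)))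
    (hm : m = (ENNReal.ofReal ((2 * Real.pi) ^ n))⁻¹ • volume)
    (g : EuclideanSpace ℝ (Fin n) → ℝ) (hgnn : ∀ ξ, 0 ≤ g ξ)
    (hgint : Integrable g m)
    (τ : ℝ) (hτ : τ = ∫ ξ, g ξ ∂m)
    (F : ℝ → ℝ) (hF : ∀ y, F y = (m {ξ | y < g ξ}).toReal)
    (hFlog : IntegrableOn (fun y => F y * Real.log (F y)) (Set.Ioi 0))
    (hglog : Integrable (fun ξ => g ξ * Real.log (g ξ)) m) :
    (∫ y in Set.Ioi (0:ℝ), F y * Real.log (F y)) ≤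
      (-∫ ξ, g ξ * Real.log (g ξ) ∂m) + τ * (1 + Real.log τ) := by
  have hFfun : F = fun y => (m {ξ | y < g ξ}).toReal := funext hF
  subst hFfun
  subst hτ
  set τ : ℝ := ∫ ξ, g ξ ∂m with hτdef
  set F : ℝ → ℝ := fun y => (m {ξ | y < g ξ}).toReal with hFdef
  have hE : (0:ℝ) < Real.exp (-1) := Real.exp_pos _
  -- closed form for the w2-primitive composed with g
  have hN_closed : (fun ω => ∫ t in (0:ℝ)..g ω, w2 t)
      = fun ω => -(min (g ω) (Real.exp (-1)) * Real.log (min (g ω) (Real.exp (-1)))) :=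
    funext fun ω => w2_eq (hgnn ω)
  have hN_int : Integrable (fun ω => ∫ t in (0:ℝ)..g ω, w2 t) m := by
    rw [hN_closed]
    refine Integrable.mono' (hglog.abs.add hgint) ?_ ?_
    · have hcont : Continuous fun x : ℝ =>
          -(min x (Real.exp (-1)) * Real.log (min x (Real.exp (-1)))) :=
        (Real.continuous_mul_log.comp (continuous_id.min continuous_const)).neg
      exact hcont.comp_aestronglyMeasurable hgint.1
    · refine Filter.Eventually.of_forall fun ω => ?_
      rcases le_total (g ω) (Real.exp (-1)) with h | h
      · rw [min_eq_left h]
        rw [Real.norm_eq_abs, abs_neg, abs_mul, ← abs_mul]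
        have := abs_nonneg (g ω * Real.log (g ω))
        have := hgnn ω
        simp only [Pi.add_apply]
        nlinarith [abs_mul (g ω) (Real.log (g ω))]
      · rw [min_eq_right h, Real.log_exp]
        simp only [Pi.add_apply]
        rw [Real.norm_eq_abs]
        have h1 : -(Real.exp (-1) * (-1)) = Real.exp (-1) := by ring
        rw [h1, abs_of_pos hE]
        have := abs_nonneg (g ω * Real.log (g ω))
        linarith
  have hP_closed : (fun ω => ∫ t in (0:ℝ)..g ω, w1 t)
      = fun ω => g ω * Real.log (g ω) + ∫ t in (0:ℝ)..g ω, w2 t :=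
    funext fun ω => w1_eq (hgnn ω)
  have hP_int : Integrable (fun ω => ∫ t in (0:ℝ)..g ω, w1 t) m := by
    rw [hP_closed]; exact hglog.add hN_int
  -- apply layer cake to w1, w2 and to the constant weight 1
  have hw1_meas : Measurable w1 := (Real.measurable_log.add measurable_const).max measurable_const
  have hw2_meas : Measurable w2 := ((Real.measurable_log.add measurable_const).neg).max
    measurable_const
  obtain ⟨hI1, e1⟩ := aux_layercake m hgnn hgint hw1_meas
    (fun t => le_max_right _ _) (fun t ht => w1_intble ht.le) hP_int
  obtain ⟨hI2, e2⟩ := aux_layercake m hgnn hgint hw2_meas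
    (fun t => le_max_right _ _) (fun t ht => w2_intble ht.le) hN_int
  have hone_int : Integrable (fun ω => ∫ t in (0:ℝ)..g ω, (1:ℝ)) m := by
    simpa using hgint
  obtain ⟨hI0, e0⟩ := aux_layercake m hgnn hgint (w := fun _ => (1:ℝ)) measurable_const
    (fun t => zero_le_one) (fun t ht => intervalIntegrable_const) hone_int
  simp only [mul_one] at hI0
  have e0' : τ = ∫ t in Ioi (0:ℝ), F t := by
    rw [hτdef]
    simpa using e0
  -- ∫ g log g = ∫ F (log + 1)
  have hFw : ∀ t, F t * w1 t - F t * w2 t = F t * (Real.log t + 1) := by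
    intro t
    have : w1 t - w2 t = Real.log t + 1 := by
      unfold w1 w2
      rcases le_total 0 (Real.log t + 1) with h | h
      · rw [max_eq_left h, max_eq_right (by linarith)]; ring
      · rw [max_eq_right h, max_eq_left (by linarith)]; ring
    rw [← this]; ring
  have hFlog1 : IntegrableOn (fun t => F t * (Real.log t + 1)) (Ioi 0) := by
    refine (hI1.sub hI2).congr (Filter.Eventually.of_forall fun t => ?_)
    simp only [Pi.sub_apply]
    exact hFw t
  have heq1 : ∫ ξ, g ξ * Real.log (g ξ) ∂m
      = ∫ t in Ioi (0:ℝ), F t * (Real.log t + 1) := by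
    have h5 : ∫ ω, (∫ t in (0:ℝ)..g ω, w1 t) ∂m
        = (∫ ξ, g ξ * Real.log (g ξ) ∂m) + ∫ ω, (∫ t in (0:ℝ)..g ω, w2 t) ∂m := by
      rw [hP_closed]
      exact integral_add hglog hN_int
    have h6 : ∫ t in Ioi (0:ℝ), F t * (Real.log t + 1)
        = (∫ t in Ioi (0:ℝ), F t * w1 t) - ∫ t in Ioi (0:ℝ), F t * w2 t := by
      rw [← integral_sub hI1 hI2]
      exact integral_congr_ae (Filter.Eventually.of_forall fun t => (hFw t).symm)
    rw [h6, ← e1, ← e2, h5]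
    ring
  -- F log t integrable and its integral
  have hFlogt : IntegrableOn (fun t => F t * Real.log t) (Ioi 0) := by
    refine (hFlog1.sub hI0).congr (Filter.Eventually.of_forall fun t => ?_)
    simp only [Pi.sub_apply]
    ring
  have hlogval : ∫ t in Ioi (0:ℝ), F t * Real.log t
      = (∫ ξ, g ξ * Real.log (g ξ) ∂m) - τ := by
    have h : ∫ t in Ioi (0:ℝ), F t * Real.log t
        = (∫ t in Ioi (0:ℝ), F t * (Real.log t + 1)) - ∫ t in Ioi (0:ℝ), F t := by
      rw [← integral_sub hFlog1 hI0]
      exact integral_congr_ae (Filter.Eventually.of_forall fun t => by ring)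
    rw [h, ← heq1, ← e0']
  -- Chebyshev
  have cheb : ∀ y : ℝ, 0 < y → y * F y ≤ τ := by
    intro y hy
    have h1 := mul_meas_ge_le_integral_of_nonneg
      (Filter.Eventually.of_forall hgnn) hgint y
    have h2 : F y ≤ (m {ξ | y ≤ g ξ}).toReal :=
      ENNReal.toReal_mono (hgint.measure_ge_lt_top hy).ne
        (measure_mono fun ξ (h : y < g ξ) => (le_of_lt h : y ≤ g ξ))
    calc y * F y ≤ y * (m {ξ | y ≤ g ξ}).toReal :=
          mul_le_mul_of_nonneg_left h2 hy.le
      _ ≤ τ := h1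
  -- RHS rewrite
  have hRHS : (-∫ ξ, g ξ * Real.log (g ξ) ∂m) + τ * (1 + Real.log τ)
      = ∫ y in Ioi (0:ℝ), (F y * Real.log τ - F y * Real.log y) := by
    have hint1 : IntegrableOn (fun y => F y * Real.log τ) (Ioi 0) := hI0.mul_const _
    rw [integral_sub hint1 hFlogt, hlogval]
    have h7 : ∫ y in Ioi (0:ℝ), F y * Real.log τ = τ * Real.log τ := by
      rw [integral_mul_const, ← e0']
    rw [h7]
    ring
  rw [hRHS]
  have hint1 : IntegrableOn (fun y => F y * Real.log τ) (Ioi 0) := hI0.mul_const _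
  refine setIntegral_mono_on hFlog (hint1.sub hFlogt) measurableSet_Ioi ?_
  intro y hy
  have hy0 : (0:ℝ) < y := hy
  have hFnn : 0 ≤ F y := ENNReal.toReal_nonneg
  rcases eq_or_lt_of_le hFnn with h0 | hpos
  · rw [← h0]; simp
  · have h1 : y * F y ≤ τ := cheb y hy0
    have h2 : 0 < y * F y := mul_pos hy0 hpos
    have h3 : Real.log (y * F y) ≤ Real.log τ := Real.log_le_log h2 h1
    rw [Real.log_mul (ne_of_gt hy0) (ne_of_gt hpos)] at h3
    have h4 : Real.log (F y) ≤ Real.log τ - Real.log y := by linarith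
    calc F y * Real.log (F y) ≤ F y * (Real.log τ - Real.log y) :=
          mul_le_mul_of_nonneg_left h4 hFnn
      _ = F y * Real.log τ - F y * Real.log y := by ring
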